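/- Let h̃: ℝⁿ × ℝⁿ → ℝ satisfy: h̃(x,y) = f̃(x,y) + g(x) with f̃(·,y) differentiable, g convex, f̃(x,x) = f(x), ∇₁f̃(x,x) = ∇f(x), and f̃(x,y) ≥ f(x) for all x,y. If x̄ minimizes h̃(·, x̄) over a convex set C, then x̄ satisfies the first-order stationarity condition of min_{x∈C} f(x) + g(x): 0 ∈ ∇f(x̄) + ∂g(x̄) + N_C(x̄), where N_C(x̄) is the normal cone of C at x̄. -/

import Mathlib

open scoped RealInnerProductSpace

open Filter Set Topology

/-- Fixed point of the surrogate minimization implies stationarity: if `x̄`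
minimizes its own convex surrogate `h̃(·, x̄) = f̃(·, x̄) + g` over a convex set
`C`, where the surrogate is value- and gradient-consistent and upper-bounds
`f`, then `0 ∈ ∇f(x̄) + ∂g(x̄) + N_C(x̄)`. -/
theorem stmt_16 (n : ℕ) (C : Set (EuclideanSpace ℝ (Fin n))) (hC : Convex ℝ C)
    (f : EuclideanSpace ℝ (Fin n) → ℝ)
    (f' : EuclideanSpace ℝ (Fin n) → EuclideanSpace ℝ (Fin n))
    (hf : ∀ x, HasGradientAt f (f' x) x)
    (g : EuclideanSpace ℝ (Fin n) → ℝ) (hg : ConvexOn ℝ Set.univ g)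
    (ftilde : EuclideanSpace ℝ (Fin n) → EuclideanSpace ℝ (Fin n) → ℝ)
    (ftilde' : EuclideanSpace ℝ (Fin n) → EuclideanSpace ℝ (Fin n) → EuclideanSpace ℝ (Fin n))
    (hftdiff : ∀ y x, HasGradientAt (fun z => ftilde z y) (ftilde' x y) x)
    (hval : ∀ x, ftilde x x = f x)
    (hgradcons : ∀ x, ftilde' x x = f' x)
    (hub : ∀ x y, f x ≤ ftilde x y)
    (xbar : EuclideanSpace ℝ (Fin n)) (hxbar : xbar ∈ C)
    (hmin : ∀ z ∈ C, ftilde xbar xbar + g xbar ≤ ftilde z xbar + g z) :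
    ∃ u v : EuclideanSpace ℝ (Fin n),
      (∀ z, g xbar + ⟪u, z - xbar⟫ ≤ g z) ∧
      (∀ z ∈ C, ⟪v, z - xbar⟫ ≤ 0) ∧
      f' xbar + u + v = 0 := by
  -- continuity of g
  have hgcont : Continuous g := by
    have := hg.continuousOn_interior
    rw [interior_univ] at this
    exact continuousOn_univ.mp this
  -- Step A : first-order optimality of the surrogate at xbar
  have key : ∀ z ∈ C, g xbar - g z ≤ ⟪f' xbar, z - xbar⟫ := by
    intro z hz
    set d : EuclideanSpace ℝ (Fin n) := z - xbar with hd
    have hline : HasDerivAt (fun t : ℝ => xbar + t • d) d 0 := by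
      simpa using ((hasDerivAt_id (0 : ℝ)).smul_const d).const_add xbar
    have hψ : HasDerivAt (fun t : ℝ => ftilde (xbar + t • d) xbar) ⟪f' xbar, d⟫ 0 := by
      have hF : HasFDerivAt (fun z => ftilde z xbar)
          (InnerProductSpace.toDual ℝ _ (ftilde' xbar xbar)) (xbar + (0:ℝ) • d) := by
        simpa using (hftdiff xbar xbar).hasFDerivAt
      have := hF.comp_hasDerivAt 0 hline
      simpa [hgradcons, InnerProductSpace.toDual_apply_apply, Function.comp_def] using this
    have hslope := hψ.tendsto_slope_zero_right
    have hev : ∀ᶠ t in 𝓝[>] (0 : ℝ),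
        g xbar - g z ≤ t⁻¹ • (ftilde (xbar + (0 + t) • d) xbar - ftilde (xbar + (0:ℝ) • d) xbar) := by
      filter_upwards [Ioo_mem_nhdsGT_of_mem (Set.left_mem_Ico.mpr one_pos)] with t ht
      have ht0 : 0 < t := ht.1
      have ht1 : t < 1 := ht.2
      have hzt_eq : xbar + t • d = (1 - t) • xbar + t • z := by rw [hd]; module
      have hzt : xbar + t • d ∈ C := by
        rw [hzt_eq]
        exact hC hxbar hz (by linarith) ht0.le (by ring)
      have h1 := hmin _ hzt
      have h2 : g (xbar + t • d) ≤ (1 - t) * g xbar + t * g z := by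
        rw [hzt_eq]
        exact hg.2 (Set.mem_univ _) (Set.mem_univ _) (by linarith) ht0.le (by ring)
      have h3 : t * (g xbar - g z) ≤ ftilde (xbar + t • d) xbar - ftilde xbar xbar := by nlinarith
      rw [smul_eq_mul, zero_add, zero_smul, add_zero, le_inv_mul_iff₀ ht0]
      linarith [h3]
    have := ge_of_tendsto hslope hev
    simpa [hd] using this
  -- Step B : separation of the strict epigraph from the feasible cone
  set A : Set (EuclideanSpace ℝ (Fin n) × ℝ) :=
    {p | g (xbar + p.1) - g xbar + ⟪f' xbar, p.1⟫ < p.2} with hA_def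
  set B : Set (EuclideanSpace ℝ (Fin n) × ℝ) := {p | xbar + p.1 ∈ C ∧ p.2 ≤ 0} with hB_def
  have hAconv : Convex ℝ A := by
    intro p hp q hq a b ha hb hab
    simp only [hA_def, Set.mem_setOf_eq] at hp hq ⊢
    have hcomb : xbar + (a • p + b • q).1 = a • (xbar + p.1) + b • (xbar + q.1) := by
      have h1 : a • (xbar + p.1) + b • (xbar + q.1)
          = (a + b) • xbar + (a • p.1 + b • q.1) := by module
      simp only [Prod.fst_add, Prod.smul_fst]
      rw [h1, hab, one_smul]
    have hgc : g (xbar + (a • p + b • q).1) ≤ a * g (xbar + p.1) + b * g (xbar + q.1) := by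
      rw [hcomb]
      exact hg.2 (Set.mem_univ _) (Set.mem_univ _) ha hb hab
    have hinner : ⟪f' xbar, (a • p + b • q).1⟫ = a * ⟪f' xbar, p.1⟫ + b * ⟪f' xbar, q.1⟫ := by
      simp only [Prod.fst_add, Prod.smul_fst]
      rw [inner_add_right, real_inner_smul_right, real_inner_smul_right]
    have hsnd : (a • p + b • q).2 = a * p.2 + b * q.2 := by simp
    rw [hinner, hsnd]
    have hgx : a * g xbar + b * g xbar = g xbar := by rw [← add_mul, hab, one_mul]
    rcases ha.eq_or_lt with rfl | ha'
    · have h2 := mul_lt_mul_of_pos_left hq (by linarith : (0:ℝ) < b)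
      linarith [hgc, h2, hgx]
    · have h1 := mul_lt_mul_of_pos_left hp ha'
      have h2 := mul_le_mul_of_nonneg_left hq.le hb
      linarith [hgc, h1, h2, hgx]
  have hAopen : IsOpen A := by
    have hc1 : Continuous fun p : EuclideanSpace ℝ (Fin n) × ℝ =>
        g (xbar + p.1) - g xbar + ⟪f' xbar, p.1⟫ := by
      apply Continuous.add
      · exact (hgcont.comp (continuous_const.add continuous_fst)).sub continuous_const
      · exact Continuous.inner continuous_const continuous_fst
    exact isOpen_lt hc1 continuous_snd
  have hBconv : Convex ℝ B := by
    intro p hp q hq a b ha hb hab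
    simp only [hB_def, Set.mem_setOf_eq] at hp hq ⊢
    constructor
    · have hcomb : xbar + (a • p + b • q).1 = a • (xbar + p.1) + b • (xbar + q.1) := by
        have h1 : a • (xbar + p.1) + b • (xbar + q.1)
            = (a + b) • xbar + (a • p.1 + b • q.1) := by module
        simp only [Prod.fst_add, Prod.smul_fst]
        rw [h1, hab, one_smul]
      rw [hcomb]
      exact hC hp.1 hq.1 ha hb hab
    · have hsnd : (a • p + b • q).2 = a * p.2 + b * q.2 := by simp
      rw [hsnd]
      nlinarith [hp.2, hq.2]
  have hdisj : Disjoint A B := by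
    rw [Set.disjoint_left]
    intro p hpA hpB
    simp only [hA_def, hB_def, Set.mem_setOf_eq] at hpA hpB
    have hk := key _ hpB.1
    have : (xbar + p.1) - xbar = p.1 := by abel
    rw [this] at hk
    linarith [hpB.2]
  obtain ⟨ℓ, u0, hA_lt, hB_ge⟩ := geometric_hahn_banach_open hAconv hAopen hBconv hdisj
  set s : ℝ := ℓ (0, 1) with hs_def
  have hz00 : ((0 : EuclideanSpace ℝ (Fin n)), (0 : ℝ)) = (0 : EuclideanSpace ℝ (Fin n) × ℝ) := rfl
  have hu0_le : u0 ≤ 0 := by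
    have h0B : ((0 : EuclideanSpace ℝ (Fin n)), (0 : ℝ)) ∈ B := by
      simp only [hB_def, Set.mem_setOf_eq]
      exact ⟨by simpa using hxbar, le_refl _⟩
    have := hB_ge _ h0B
    rw [hz00, map_zero] at this
    exact this
  have hℓ_eq : ∀ (d : EuclideanSpace ℝ (Fin n)) (t : ℝ), ℓ (d, t) = ℓ (d, 0) + t * s := by
    intro d t
    have : ((d, t) : EuclideanSpace ℝ (Fin n) × ℝ)
        = (d, 0) + t • ((0 : EuclideanSpace ℝ (Fin n)), (1 : ℝ)) := by
      simp [Prod.ext_iff]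
    rw [this, map_add, map_smul, smul_eq_mul, hs_def]
  have hsneg : s < 0 := by
    have h01A : ((0 : EuclideanSpace ℝ (Fin n)), (1 : ℝ)) ∈ A := by
      simp [hA_def]
    have := hA_lt _ h01A
    rw [hs_def]; linarith
  have hu0_ge : 0 ≤ u0 := by
    by_contra hcon
    push_neg at hcon
    have htpos : 0 < u0 / s := div_pos_of_neg_of_neg hcon hsneg
    have hmem : ((0 : EuclideanSpace ℝ (Fin n)), u0 / s) ∈ A := by
      simp [hA_def, htpos]
    have := hA_lt _ hmem
    rw [hℓ_eq, hz00, map_zero, zero_add, div_mul_cancel₀ _ (ne_of_lt hsneg)] at this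
    exact lt_irrefl _ this
  have hu0 : u0 = 0 := le_antisymm hu0_le hu0_ge
  clear_value s
  set w : EuclideanSpace ℝ (Fin n) :=
    (InnerProductSpace.toDual ℝ (EuclideanSpace ℝ (Fin n))).symm
      (ℓ.comp (ContinuousLinearMap.inl ℝ (EuclideanSpace ℝ (Fin n)) ℝ)) with hw_def
  have hw : ∀ d : EuclideanSpace ℝ (Fin n), ⟪w, d⟫ = ℓ (d, 0) := by
    intro d
    rw [hw_def, InnerProductSpace.toDual_symm_apply]
    simp
  clear_value w
  have hsub : ∀ d : EuclideanSpace ℝ (Fin n),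
      ⟪w, d⟫ + (g (xbar + d) - g xbar + ⟪f' xbar, d⟫) * s ≤ 0 := by
    intro d
    set V : ℝ := g (xbar + d) - g xbar + ⟪f' xbar, d⟫ with hV
    clear_value V
    have hstep : ∀ ε : ℝ, 0 < ε → ⟪w, d⟫ + (V + ε) * s < 0 := by
      intro ε hε
      have hmem : ((d, V + ε) : EuclideanSpace ℝ (Fin n) × ℝ) ∈ A := by
        simp only [hA_def, Set.mem_setOf_eq, ← hV]
        linarith
      have := hA_lt _ hmem
      rw [hℓ_eq, ← hw, hu0] at this
      linarith
    by_contra hcon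
    push_neg at hcon
    set X : ℝ := ⟪w, d⟫ + V * s with hX
    clear_value X
    have hXpos : 0 < X := hcon
    have hε : 0 < X / (2 * (-s)) := div_pos hXpos (by linarith)
    have h2 := hstep _ hε
    have hεs : X / (2 * (-s)) * s = -(X / 2) := by
      have hs0 : s ≠ 0 := ne_of_lt hsneg
      field_simp
    have h3 : ⟪w, d⟫ + V * s + X / (2 * -s) * s < 0 := by nlinarith [h2]
    rw [hεs] at h3
    linarith [h3, hX, hXpos]
  have hnorm : ∀ z ∈ C, 0 ≤ ⟪w, z - xbar⟫ := by
    intro z hz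
    have hmem : ((z - xbar, 0) : EuclideanSpace ℝ (Fin n) × ℝ) ∈ B := by
      simp only [hB_def, Set.mem_setOf_eq]
      refine ⟨?_, le_refl _⟩
      have : xbar + (z - xbar) = z := by abel
      rw [this]; exact hz
    have := hB_ge _ hmem
    rw [← hw, hu0] at this
    exact this
  -- assemble the certificates
  set c : ℝ := (-s)⁻¹ with hc_def
  have hcpos : 0 < c := by rw [hc_def]; exact inv_pos.mpr (by linarith)
  have hcs' : c * s = -1 := by
    have hns : (-s) ≠ 0 := ne_of_gt (by linarith : (0:ℝ) < -s)
    rw [hc_def, inv_mul_eq_div, div_eq_iff hns]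
    ring
  refine ⟨c • w - f' xbar, -(c • w), ?_, ?_, ?_⟩
  · intro z
    have h1 := hsub (z - xbar)
    have hzz : xbar + (z - xbar) = z := by abel
    rw [hzz] at h1
    have h2 : ⟪c • w - f' xbar, z - xbar⟫ = c * ⟪w, z - xbar⟫ - ⟪f' xbar, z - xbar⟫ := by
      rw [inner_sub_left, real_inner_smul_left]
    rw [h2]
    set W : ℝ := ⟪w, z - xbar⟫ with hW
    set F : ℝ := ⟪f' xbar, z - xbar⟫ with hF
    have h4 : c * (W + (g z - g xbar + F) * s) ≤ 0 :=
      mul_nonpos_iff.mpr (Or.inl ⟨hcpos.le, h1⟩)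
    have h5 : c * (W + (g z - g xbar + F) * s)
        = c * W + (g z - g xbar + F) * (c * s) := by ring
    rw [h5, hcs'] at h4
    linarith [h4]
  · intro z hz
    rw [inner_neg_left, real_inner_smul_left]
    have h1 := hnorm z hz
    have := mul_nonneg hcpos.le h1
    linarith
  · abel
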